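/- Let τ ∈ ℂ with Im(τ) ≥ √3/2, set q = exp(2πiτ) and Δ(τ) = q · ∏_{n=1}^∞ (1 − q^n)^{24}. Then |(2π)^{12} · Δ(τ) · Im(τ)^6| ≤ e^{16}, i.e. log|(2π)^{12} Δ(τ) Im(τ)^6| ≤ 16. -/

import Mathlib

set_option maxHeartbeats 1000000

open Complex in
/-- For `τ ∈ ℂ` with `Im τ ≥ √3/2`, setting `q = exp(2πiτ)` and
`Δ(τ) = q ∏_{n ≥ 1} (1 − qⁿ)²⁴`, one has `log |(2π)¹² Δ(τ) (Im τ)⁶| ≤ 16`. -/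
theorem discriminant_form_log_bound (τ : ℂ) (h : Real.sqrt 3 / 2 ≤ τ.im) :
    Real.log ‖
      (((2 * Real.pi : ℝ) : ℂ) ^ 12 *
        (Complex.exp (2 * Real.pi * Complex.I * τ) *
          ∏' n : ℕ, (1 - Complex.exp (2 * Real.pi * Complex.I * τ) ^ (n + 1)) ^ 24) *
        ((τ.im : ℂ) ^ 6))‖ ≤ 16 := by
  have hπ := Real.pi_gt_d6
  have hπ' := Real.pi_lt_d6
  set y : ℝ := τ.im with hy
  have hsq : (1.732:ℝ) ≤ Real.sqrt 3 := by
    nlinarith [Real.sq_sqrt (by norm_num : (0:ℝ) ≤ 3), Real.sqrt_nonneg 3]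
  have hy0 : 0 < y := lt_of_lt_of_le (by nlinarith) h
  set q : ℂ := Complex.exp (2 * Real.pi * Complex.I * τ) with hqdef
  set r : ℝ := Real.exp (-(2 * Real.pi * y)) with hrdef
  have hq : ‖q‖ = r := by
    rw [hqdef, Complex.norm_exp, hrdef]
    congr 1
    simp [Complex.mul_re, Complex.mul_im, hy]
  clear_value q r
  have hr0 : 0 < r := hrdef ▸ Real.exp_pos _
  have hr1 : r < 1 := hrdef ▸ Real.exp_lt_one_iff.mpr (by nlinarith)
  -- r ≤ 1/213
  have h213 : (213:ℝ) ≤ Real.exp (Real.pi * Real.sqrt 3) := by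
    have h1 : (5.441:ℝ) ≤ Real.pi * Real.sqrt 3 := by nlinarith
    calc (213:ℝ) ≤ 2.7182818283^5 * 1.441 := by norm_num
    _ ≤ Real.exp 1 ^ 5 * Real.exp 0.441 := by
        have e1 : (2.7182818283:ℝ)^5 ≤ Real.exp 1 ^ 5 :=
          pow_le_pow_left₀ (by norm_num) Real.exp_one_gt_d9.le 5
        have e2 : (1.441:ℝ) ≤ Real.exp 0.441 := by
          nlinarith [Real.add_one_le_exp (0.441:ℝ)]
        exact mul_le_mul e1 e2 (by norm_num) (by positivity)
    _ = Real.exp 5.441 := by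
        rw [Real.exp_one_pow, ← Real.exp_add]; norm_num
    _ ≤ Real.exp (Real.pi * Real.sqrt 3) := Real.exp_le_exp.mpr h1
  have hr213 : r ≤ 1/213 := by
    have h1 : r ≤ Real.exp (-(Real.pi * Real.sqrt 3)) := by
      rw [hrdef]
      apply Real.exp_le_exp.mpr
      nlinarith [Real.sqrt_nonneg 3]
    rw [Real.exp_neg] at h1
    have h2 : (Real.exp (Real.pi * Real.sqrt 3))⁻¹ ≤ 213⁻¹ := by
      apply inv_anti₀ (by norm_num) h213
    calc r ≤ _ := h1
    _ ≤ _ := h2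
    _ = 1/213 := by norm_num
  -- summability
  have hsum : Summable (fun n : ℕ => 24 * r ^ (n+1)) := by
    apply (((summable_geometric_of_lt_one hr0.le hr1).mul_left (24*r)).congr)
    intro n; ring
  have hS : (∑' n:ℕ, 24 * r^(n+1)) = 24 * r * (1-r)⁻¹ := by
    have h1 : (fun n:ℕ => 24 * r^(n+1)) = (fun n:ℕ => (24*r) * r^n) := by
      funext n; ring
    rw [h1, tsum_mul_left, tsum_geometric_of_lt_one hr0.le hr1]
  have h1r : (0:ℝ) < 1 - r := by linarith
  have hSle : (∑' n:ℕ, 24 * r^(n+1)) ≤ 24/212 := by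
    rw [hS]
    have ht : (1-r)⁻¹ ≤ 213/212 := by
      rw [show (213:ℝ)/212 = ((212:ℝ)/213)⁻¹ by norm_num]
      apply inv_anti₀ (by norm_num)
      linarith
    calc 24 * r * (1-r)⁻¹ ≤ 24 * (1/213) * (213/212) := by
          apply mul_le_mul (by linarith) ht (by positivity) (by norm_num)
    _ = 24/212 := by norm_num
  -- nonvanishing and multipliability
  have hqn : ∀ n:ℕ, ‖q^(n+1)‖ = r^(n+1) := fun n => by rw [norm_pow, hq]
  have hqlt : ∀ n:ℕ, r^(n+1) ≤ r := fun n => by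
    calc r^(n+1) ≤ r^1 := pow_le_pow_of_le_one hr0.le hr1.le (by omega)
    _ = r := pow_one r
  have hne : ∀ n:ℕ, (1:ℂ) - q^(n+1) ≠ 0 := by
    intro n hc
    rw [sub_eq_zero] at hc
    have h1 : ‖q^(n+1)‖ = 1 := by rw [← hc, norm_one]
    rw [hqn] at h1
    nlinarith [hqlt n]
  have hmul1 : Multipliable (fun n:ℕ => 1 - q^(n+1)) := by
    apply Complex.multipliable_of_summable_log
    apply Summable.of_norm
    apply Summable.of_nonneg_of_le (fun n => norm_nonneg _) (fun n => ?_)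
      ((summable_geometric_of_lt_one hr0.le hr1).mul_left (3/2 * r))
    have hb : ‖-(q^(n+1))‖ ≤ 1/2 := by
      rw [norm_neg, hqn]
      calc r^(n+1) ≤ r := hqlt n
      _ ≤ 1/2 := by linarith
    have := Complex.norm_log_one_add_half_le_self hb
    rw [show (1:ℂ) + -(q^(n+1)) = 1 - q^(n+1) by ring] at this
    calc ‖Complex.log (1 - q^(n+1))‖ ≤ 3/2 * ‖-(q^(n+1))‖ := this
    _ = 3/2 * r^(n+1) := by rw [norm_neg, hqn]
    _ = 3/2 * (r * r^n) := by ring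
    _ = 3/2 * r * r^n := by ring
  have hmulk : ∀ k:ℕ, Multipliable (fun n:ℕ => (1 - q^(n+1))^k) := by
    intro k
    induction k with
    | zero => simpa using multipliable_one
    | succ k ih =>
      apply (ih.mul hmul1).congr
      intro n
      exact (pow_succ _ _).symm
  have hmul24 := hmulk 24
  have hmabs := hmul24.norm
  -- bound on the product
  have hT : ‖∏' n:ℕ, (1 - q^(n+1))^24‖ ≤ Real.exp (∑' n:ℕ, 24 * r^(n+1)) := by
    rw [hmul24.norm_tprod]
    refine hasProd_le_of_prod_le hmabs.hasProd fun s => ?_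
    have step1 : ∏ n ∈ s, ‖(1 - q^(n+1))^24‖
        ≤ ∏ n ∈ s, Real.exp (24 * r^(n+1)) := by
      apply Finset.prod_le_prod (fun n _ => by positivity)
      intro n _
      have h1 : ‖1 - q^(n+1)‖ ≤ 1 + r^(n+1) := by
        calc ‖1 - q^(n+1)‖ ≤ ‖(1:ℂ)‖ + ‖q^(n+1)‖ :=
          norm_sub_le 1 (q^(n+1))
        _ = 1 + r^(n+1) := by rw [norm_one, hqn]
      have h2 : (1:ℝ) + r^(n+1) ≤ Real.exp (r^(n+1)) := by
        nlinarith [Real.add_one_le_exp (r^(n+1))]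
      rw [norm_pow]
      calc ‖1 - q^(n+1)‖^24 ≤ (Real.exp (r^(n+1)))^24 :=
            pow_le_pow_left₀ (norm_nonneg _) (h1.trans h2) 24
      _ = Real.exp (24 * r^(n+1)) := by rw [← Real.exp_nat_mul]; norm_num
    have step2 : ∏ n ∈ s, Real.exp (24 * r^(n+1))
        = Real.exp (∑ n ∈ s, 24 * r^(n+1)) := (Real.exp_sum s _).symm
    have step3 : Real.exp (∑ n ∈ s, 24 * r^(n+1)) ≤ Real.exp (∑' n:ℕ, 24 * r^(n+1)) :=
      Real.exp_le_exp.mpr (Summable.sum_le_tsum s (fun i _ => by positivity) hsum)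
    linarith
  set S : ℝ := ∑' n:ℕ, 24 * r^(n+1) with hSdef
  set T : ℝ := ‖∏' n:ℕ, (1 - q^(n+1))^24‖ with hTdef
  have hT0 : 0 ≤ T := hTdef ▸ norm_nonneg _
  have hA : ‖((2 * Real.pi : ℝ) : ℂ) ^ 12 *
      (q * ∏' n : ℕ, (1 - q ^ (n + 1)) ^ 24) * ((y : ℂ) ^ 6)‖
      = (2*Real.pi)^12 * (r * T) * y^6 := by
    rw [norm_mul, norm_mul, norm_mul, norm_pow, norm_pow, Complex.norm_real, Complex.norm_real,
      Real.norm_eq_abs, Real.norm_eq_abs, hq, abs_of_pos (by positivity : (0:ℝ) < 2*Real.pi), abs_of_pos hy0, hTdef]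
  -- logarithmic estimates
  have hlog2 := Real.log_two_lt_d9
  have hπ0 : (0:ℝ) < Real.pi := by linarith
  have hlogy : Real.log y ≤ Real.pi*y/3 - 1 + Real.log 3 - Real.log Real.pi := by
    have h1 : Real.log (Real.pi*y/3) ≤ Real.pi*y/3 - 1 :=
      Real.log_le_sub_one_of_pos (by positivity)
    have h2 : Real.log (Real.pi*y/3) = Real.log Real.pi + Real.log y - Real.log 3 := by
      rw [Real.log_div (by positivity) (by norm_num), Real.log_mul hπ0.ne' hy0.ne']
    linarith
  have hlog3π : Real.log 3 + Real.log Real.pi ≤ 3*Real.log 2 + (3*Real.pi/8 - 1) := by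
    have h1 : Real.log (3*Real.pi/8) ≤ 3*Real.pi/8 - 1 :=
      Real.log_le_sub_one_of_pos (by positivity)
    have h2 : Real.log (3*Real.pi/8) = Real.log 3 + Real.log Real.pi - Real.log 8 := by
      rw [Real.log_div (by positivity) (by norm_num), Real.log_mul (by norm_num) hπ0.ne']
    have h8 : Real.log 8 = 3*Real.log 2 := by
      rw [show (8:ℝ) = 2^3 by norm_num, Real.log_pow]; norm_num
    linarith
  have hL : Real.log (2*Real.pi) = Real.log 2 + Real.log Real.pi :=
    Real.log_mul (by norm_num) hπ0.ne'
  have harg : 12 * Real.log (2*Real.pi) + (-(2*Real.pi*y) + S) + 6 * Real.log y ≤ 16 := by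
    rw [hL]
    nlinarith [hlogy, hlog3π, hlog2, hπ', hSle]
  have hexp : (2*Real.pi)^12 * (r * T) * y^6 ≤ Real.exp 16 := by
    have e0 : (0:ℝ) < 2*Real.pi := by positivity
    have e1 : (2*Real.pi)^12 = Real.exp (12 * Real.log (2*Real.pi)) := by
      rw [show (12:ℝ) * Real.log (2*Real.pi) = ((12:ℕ):ℝ) * Real.log (2*Real.pi) by norm_num,
        Real.exp_nat_mul, Real.exp_log e0]
    have e2 : y^6 = Real.exp (6 * Real.log y) := by
      rw [show (6:ℝ) * Real.log y = ((6:ℕ):ℝ) * Real.log y by norm_num,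
        Real.exp_nat_mul, Real.exp_log hy0]
    have e3 : r * T ≤ r * Real.exp S := mul_le_mul_of_nonneg_left hT hr0.le
    calc (2*Real.pi)^12 * (r*T) * y^6
        ≤ Real.exp (12*Real.log (2*Real.pi)) * (Real.exp (-(2*Real.pi*y)) * Real.exp S) *
            Real.exp (6*Real.log y) := by
          rw [← e1, ← e2, ← hrdef]
          exact mul_le_mul_of_nonneg_right
            (mul_le_mul_of_nonneg_left e3 (by positivity)) (by positivity)
    _ = Real.exp (12*Real.log (2*Real.pi) + (-(2*Real.pi*y) + S) + 6*Real.log y) := by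
          simp only [← Real.exp_add]
    _ ≤ Real.exp 16 := Real.exp_le_exp.mpr harg
  rw [hA]
  rcases hT0.eq_or_lt with h0 | h0
  · rw [← h0]
    simp
  · have hApos : (0:ℝ) < (2*Real.pi)^12 * (r * T) * y^6 := by positivity
    have hfin := Real.log_le_log hApos hexp
    rwa [Real.log_exp] at hfin
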